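/- Let c, K, λ, μ ∈ ℂ with c² ≠ K, μ ≠ 0, μ² ≠ 1, and suppose (μ²−1)·((λ−c·μ)² − K·μ²) + μ² = 0. Let A∞ be the 4×4 complex matrix with rows (cλ/(c²−K), λ/(c²−K), 0, 1/(c²−K)), (Kλ/(c²−K), cλ/(c²−K), 0, c/(c²−K)), (0, 0, 0, 1), (−1, 0, 1, 0), and let v ∈ ℂ⁴ be the vector v = (1, (c·μ−λ)/μ, 1/(1−μ²), μ/(1−μ²)). Then A∞ · v = μ · v. -/

import Mathlib

open Matrix

/-- The vector `v = (1, (cμ−λ)/μ, 1/(1−μ²), μ/(1−μ²))` is a right eigenvector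
of the asymptotic matrix `A∞(λ)` with eigenvalue `μ`, whenever `μ` is a root of the
characteristic quartic. -/
theorem right_eigenvector_asymptotic_matrix (c K lam μ : ℂ)
    (hcK : c ^ 2 ≠ K) (hμ0 : μ ≠ 0) (hμ1 : μ ^ 2 ≠ 1)
    (hroot : (μ ^ 2 - 1) * ((lam - c * μ) ^ 2 - K * μ ^ 2) + μ ^ 2 = 0)
    (A : Matrix (Fin 4) (Fin 4) ℂ)
    (hA : A = !![c * lam / (c ^ 2 - K), lam / (c ^ 2 - K), 0, 1 / (c ^ 2 - K);
                 K * lam / (c ^ 2 - K), c * lam / (c ^ 2 - K), 0, c / (c ^ 2 - K);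
                 0, 0, 0, 1;
                 -1, 0, 1, 0])
    (v : Fin 4 → ℂ)
    (hv : v = ![1, (c * μ - lam) / μ, 1 / (1 - μ ^ 2), μ / (1 - μ ^ 2)]) :
    A.mulVec v = μ • v := by
  have hcK' : c ^ 2 - K ≠ 0 := sub_ne_zero.mpr hcK
  have hμ1' : 1 - μ ^ 2 ≠ 0 := fun h => hμ1 (by linear_combination -h)
  subst hA hv
  funext i
  fin_cases i <;>
    simp only [mulVec, dotProduct, Fin.sum_univ_four, cons_val', cons_val_zero, cons_val_one,
      head_cons, head_fin_const, empty_val', cons_val_fin_one, cons_val_two, tail_cons,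
      cons_val_three, Pi.smul_apply, smul_eq_mul, of_apply, Fin.isValue, Fin.zero_eta, Fin.mk_one, Fin.reduceFinMk]
  · field_simp
    linear_combination hroot
  · field_simp
    linear_combination c * hroot
  · field_simp
    ring
  · field_simp
    ring
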